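/- Let m ≥ 3 be odd and let d be an integer with gcd(d, 2^m - 1) = 1 such that the power function x ↦ x^d on F = GF(2^m) is maximum nonlinear. Assume that for all α, β ∈ F \ {0} with α ≠ β and all i, j ∈ GF(2) the cardinality |H^{i,j}(α,β) ∩ D_d| belongs to {2^(m-3), 2^(m-3) - 2^((m-3)/2), 2^(m-3) + 2^((m-3)/2)}. Then for every ω ∈ F: Σ_{y ∈ F} (-1)^(tr(y^d + (y+ω)^d)) equals 2^m if ω = 0, equals -2^m if ω = 1, and equals 0 for all ω ∈ F \ {0, 1}. -/
import Mathlib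

attribute [local instance] Classical.propDecidable

noncomputable instance (m : ℕ) : Fintype (GaloisField 2 m) := Fintype.ofFinite _

/-- The absolute trace map from `GF(2^m)` to `GF(2)`. -/
noncomputable def tr (m : ℕ) (x : GaloisField 2 m) : ZMod 2 :=
  Algebra.trace (ZMod 2) (GaloisField 2 m) x

/-- `(-1)^t` as an integer, for `t ∈ GF(2)`. -/
def chi (t : ZMod 2) : ℤ := (-1) ^ t.val

/-- The Walsh coefficient `∑_{x ∈ F} (-1)^(tr(γx + βx^d))` of the power map `x ↦ x^d`. -/
noncomputable def walsh (m d : ℕ) (β γ : GaloisField 2 m) : ℤ :=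
  ∑ x : GaloisField 2 m, chi (tr m (γ * x + β * x ^ d))

/-- The power function `x ↦ x^d` on `GF(2^m)` is maximum nonlinear (almost bent). -/
def MaxNonlinear (m d : ℕ) : Prop :=
  ∀ β : GaloisField 2 m, β ≠ 0 → ∀ γ : GaloisField 2 m,
    walsh m d β γ ∈ ({0, 2 ^ ((m + 1) / 2), -(2 ^ ((m + 1) / 2))} : Set ℤ)

/-- `D_d = {x ∈ F : tr(x^d) = 1}`. -/
noncomputable def Dd (m d : ℕ) : Finset (GaloisField 2 m) :=
  Finset.univ.filter (fun x => tr m (x ^ d) = 1)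

/-- `H^i(α) = {x ∈ F : tr(αx) = i}`. -/
noncomputable def Hi (m : ℕ) (α : GaloisField 2 m) (i : ZMod 2) :
    Finset (GaloisField 2 m) :=
  Finset.univ.filter (fun x => tr m (α * x) = i)

/-- `H^{i,j}(α,β) = {x ∈ F : tr(αx) = i and tr(βx) = j}`. -/
noncomputable def Hij (m : ℕ) (α β : GaloisField 2 m) (i j : ZMod 2) :
    Finset (GaloisField 2 m) :=
  Finset.univ.filter (fun x => tr m (α * x) = i ∧ tr m (β * x) = j)

namespace Stmt10Aux

lemma chi_add (s t : ZMod 2) : chi (s + t) = chi s * chi t := by revert s t; decide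

lemma chi_zero : chi 0 = 1 := rfl
lemma chi_one : chi 1 = -1 := rfl

lemma tr_add {m : ℕ} (x y : GaloisField 2 m) : tr m (x + y) = tr m x + tr m y :=
  map_add (Algebra.trace (ZMod 2) (GaloisField 2 m)) x y

lemma tr_zero {m : ℕ} : tr m 0 = 0 :=
  map_zero (Algebra.trace (ZMod 2) (GaloisField 2 m))

lemma card_F {m : ℕ} (hm : m ≠ 0) : Fintype.card (GaloisField 2 m) = 2 ^ m := by
  rw [← Nat.card_eq_fintype_card, GaloisField.card _ _ hm]

/-- trace pairing as an additive hom. -/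
noncomputable def trH (m : ℕ) (z : GaloisField 2 m) : GaloisField 2 m →+ ZMod 2 :=
  ((Algebra.trace (ZMod 2) (GaloisField 2 m)).toAddMonoidHom).comp (AddMonoidHom.mulLeft z)

lemma trH_apply {m : ℕ} (z x : GaloisField 2 m) : trH m z x = tr m (z * x) := rfl

lemma sum_chi_eq_zero {m : ℕ} (ρ : GaloisField 2 m →+ ZMod 2) (hρ : ρ ≠ 0) :
    ∑ x : GaloisField 2 m, chi (ρ x) = 0 := by
  obtain ⟨a, ha⟩ : ∃ a, ρ a ≠ 0 := by
    by_contra h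
    push_neg at h
    exact hρ (DFunLike.ext _ _ fun x => h x)
  have ha1 : ρ a = 1 := by
    have := ha; revert this; generalize ρ a = t; revert t; decide
  have h2 : ∑ x : GaloisField 2 m, chi (ρ (x + a)) = ∑ x : GaloisField 2 m, chi (ρ x) :=
    Fintype.sum_equiv (Equiv.addRight a) _ _ (fun x => rfl)
  simp only [map_add, ha1, chi_add, chi_one, mul_neg_one] at h2
  rw [Finset.sum_neg_distrib] at h2
  linarith

lemma tr_exists_one {m : ℕ} (hm : m ≠ 0) : ∃ a : GaloisField 2 m, tr m a = 1 :=
  Algebra.trace_surjective (ZMod 2) (GaloisField 2 m) 1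

lemma trH_ne_zero {m : ℕ} (hm : m ≠ 0) {z : GaloisField 2 m} (hz : z ≠ 0) :
    trH m z ≠ 0 := by
  intro h0
  obtain ⟨a, ha⟩ := tr_exists_one hm
  have : tr m (z * (z⁻¹ * a)) = 0 := by
    rw [← trH_apply, h0]; rfl
  rw [← mul_assoc, mul_inv_cancel₀ hz, one_mul, ha] at this
  exact one_ne_zero this

lemma sum_chi_tr {m : ℕ} (hm : m ≠ 0) (z : GaloisField 2 m) :
    ∑ x : GaloisField 2 m, chi (tr m (z * x)) = if z = 0 then (2 ^ m : ℤ) else 0 := by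
  split_ifs with h
  · subst h
    simp only [zero_mul, tr_zero, chi_zero, Finset.sum_const, Finset.card_univ, card_F hm,
      smul_eq_mul, mul_one]
    ring
  · exact sum_chi_eq_zero (trH m z) (trH_ne_zero hm h)

lemma sum_chi_hom {m : ℕ} (hm : m ≠ 0) (ρ : GaloisField 2 m →+ ZMod 2) :
    ∑ x : GaloisField 2 m, chi (ρ x) = if ρ = 0 then (2 ^ m : ℤ) else 0 := by
  split_ifs with h
  · subst h
    simp only [AddMonoidHom.zero_apply, chi_zero, Finset.sum_const, Finset.card_univ,
      card_F hm, smul_eq_mul, mul_one]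
    ring
  · exact sum_chi_eq_zero ρ h

/-- The `d`-th power map is a bijection when `gcd(d, 2^m - 1) = 1`. -/
lemma pow_d_bij {m d : ℕ} (hm : 3 ≤ m) (hgcd : Nat.gcd d (2 ^ m - 1) = 1) :
    Function.Bijective (fun x : GaloisField 2 m => x ^ d) := by
  have hm0 : m ≠ 0 := by omega
  have hcard : Nat.card (GaloisField 2 m)ˣ = 2 ^ m - 1 := by
    rw [Nat.card_units, GaloisField.card _ _ hm0]
  have hd : d ≠ 0 := by
    rintro rfl
    simp only [Nat.gcd_zero_left] at hgcd
    have : 2 ^ 3 ≤ 2 ^ m := Nat.pow_le_pow_right (by norm_num) hm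
    omega
  have hb : Function.Bijective (fun u : (GaloisField 2 m)ˣ => u ^ d) := by
    apply Nat.Coprime.pow_left_bijective
    rw [hcard]
    exact (Nat.coprime_comm.mp hgcd)
  rw [Finite.injective_iff_bijective.symm] at *
  intro x y h
  simp only at h
  rcases eq_or_ne y 0 with rfl | hy
  · rw [zero_pow hd] at h
    exact pow_eq_zero_iff hd |>.mp h
  rcases eq_or_ne x 0 with rfl | hx
  · rw [zero_pow hd] at h
    exact ((pow_eq_zero_iff hd).mp h.symm).symm ▸ rfl
  · have := hb (a₁ := Units.mk0 x hx) (a₂ := Units.mk0 y hy) (by ext; simpa using h)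
    simpa [Units.ext_iff] using this

/-- Frobenius as an algebra automorphism. -/
noncomputable def frobAlg (m : ℕ) : GaloisField 2 m ≃ₐ[ZMod 2] GaloisField 2 m :=
  AlgEquiv.ofRingEquiv (f := frobeniusEquiv (GaloisField 2 m) 2) (by
    intro c
    have hc : c ^ 2 = c := by revert c; decide
    show frobenius (GaloisField 2 m) 2 _ = _
    rw [frobenius_def, ← map_pow, hc])

lemma tr_sq (m : ℕ) (x : GaloisField 2 m) : tr m (x ^ 2) = tr m x := by
  have hinj := (algebraMap (ZMod 2) (GaloisField 2 m)).injective
  apply hinj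
  show algebraMap (ZMod 2) _ (Algebra.trace (ZMod 2) _ _)
      = algebraMap (ZMod 2) _ (Algebra.trace (ZMod 2) _ _)
  rw [trace_eq_sum_automorphisms, trace_eq_sum_automorphisms]
  rw [show x ^ 2 = frobAlg m x from rfl]
  exact Fintype.sum_bijective (· * frobAlg m) (Group.mulRight_bijective _)
    (fun σ => σ (frobAlg m x)) (fun τ => τ x) (fun σ => rfl)

/-- the correlation of `D_d` with the hyperplane defined by `z`. -/
noncomputable def Wd (m d : ℕ) (z : GaloisField 2 m) : ℤ :=
  ∑ x ∈ Dd m d, chi (tr m (z * x))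

lemma walsh_one_eq {m : ℕ} (hm : m ≠ 0) (d : ℕ) (z : GaloisField 2 m) :
    walsh m d 1 z = (if z = 0 then (2 ^ m : ℤ) else 0) - 2 * Wd m d z := by
  have hpt : ∀ s t : ZMod 2, chi (s + t) = chi s - (if t = 1 then 2 * chi s else 0) := by
    decide
  have : walsh m d 1 z = ∑ x : GaloisField 2 m,
      (chi (tr m (z * x)) - (if tr m (x ^ d) = 1 then 2 * chi (tr m (z * x)) else 0)) := by
    unfold walsh
    refine Finset.sum_congr rfl fun x _ => ?_
    rw [one_mul, tr_add, hpt]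
  rw [this, Finset.sum_sub_distrib, sum_chi_tr hm]
  congr 1
  rw [Wd, Finset.mul_sum, Dd, Finset.sum_filter]

lemma sumD_eq_zero {m d : ℕ} (hm3 : 3 ≤ m) (hgcd : Nat.gcd d (2 ^ m - 1) = 1) :
    ∑ x : GaloisField 2 m, chi (tr m (x ^ d)) = 0 := by
  have hm0 : m ≠ 0 := by omega
  rw [Fintype.sum_bijective _ (pow_d_bij hm3 hgcd)
    (fun x => chi (tr m (x ^ d))) (fun y => chi (tr m y)) (fun x => rfl)]
  have := sum_chi_tr hm0 (1 : GaloisField 2 m)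
  rw [if_neg one_ne_zero] at this
  simpa using this

lemma walsh_at_zero {m d : ℕ} (hm3 : 3 ≤ m) (hgcd : Nat.gcd d (2 ^ m - 1) = 1) :
    walsh m d 1 0 = 0 := by
  have : walsh m d 1 0 = ∑ x : GaloisField 2 m, chi (tr m (x ^ d)) := by
    unfold walsh
    refine Finset.sum_congr rfl fun x _ => ?_
    rw [zero_mul, zero_add, one_mul]
  rw [this, sumD_eq_zero hm3 hgcd]

lemma cardD {m d : ℕ} (hm3 : 3 ≤ m) (hgcd : Nat.gcd d (2 ^ m - 1) = 1) :
    (2 : ℤ) * ((Dd m d).card : ℤ) = 2 ^ m := by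
  have hm0 : m ≠ 0 := by omega
  have h1 := walsh_one_eq hm0 d (0 : GaloisField 2 m)
  rw [walsh_at_zero hm3 hgcd, if_pos rfl] at h1
  have h2 : Wd m d 0 = ((Dd m d).card : ℤ) := by
    unfold Wd
    simp [tr_zero, chi_zero]
  rw [h2] at h1
  linarith

lemma fourN {m : ℕ} (d : ℕ) (α β : GaloisField 2 m) (i j : ZMod 2) :
    4 * ((Hij m α β i j ∩ Dd m d).card : ℤ)
      = ((Dd m d).card : ℤ) + chi i * Wd m d α + chi j * Wd m d β
        + chi i * chi j * Wd m d (α + β) := by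
  classical
  have hsplit : Hij m α β i j ∩ Dd m d
      = (Dd m d).filter (fun x => tr m (α * x) = i ∧ tr m (β * x) = j) := by
    ext x
    simp only [Hij, Dd, Finset.mem_inter, Finset.mem_filter, Finset.mem_univ, true_and]
    tauto
  have hcard : ((Hij m α β i j ∩ Dd m d).card : ℤ)
      = ∑ x ∈ Dd m d, (if tr m (α * x) = i ∧ tr m (β * x) = j then (1 : ℤ) else 0) := by
    rw [hsplit, Finset.card_filter]
    push_cast [apply_ite (Nat.cast : ℕ → ℤ)]
    rfl
  have hpt : ∀ s t i j : ZMod 2,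
      4 * (if s = i ∧ t = j then (1 : ℤ) else 0)
        = 1 + chi i * chi s + chi j * chi t + chi i * chi j * (chi s * chi t) := by decide
  rw [hcard, Finset.mul_sum]
  have : ∀ x ∈ Dd m d, 4 * (if tr m (α * x) = i ∧ tr m (β * x) = j then (1:ℤ) else 0)
      = 1 + chi i * chi (tr m (α * x)) + chi j * chi (tr m (β * x))
        + chi i * chi j * chi (tr m ((α + β) * x)) := by
    intro x _
    rw [show tr m ((α + β) * x) = tr m (α * x) + tr m (β * x) by rw [add_mul, tr_add]]
    rw [chi_add]
    exact hpt _ _ _ _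
  rw [Finset.sum_congr rfl this]
  rw [Finset.sum_add_distrib, Finset.sum_add_distrib, Finset.sum_add_distrib]
  simp only [Finset.sum_const, smul_eq_mul, mul_one, ← Finset.mul_sum]
  rw [Wd, Wd, Wd]
  ring

lemma parity (N E P n00 n01 n10 n11 wa wb wc : ℤ)
    (hP4 : P = 4 * N) (hE : 1 ≤ E)
    (e00 : 4 * n00 = P + wa + wb + wc) (e01 : 4 * n01 = P + wa - wb - wc)
    (e10 : 4 * n10 = P - wa + wb - wc) (e11 : 4 * n11 = P - wa - wb + wc)
    (h00 : n00 = N ∨ n00 = N - E ∨ n00 = N + E)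
    (h01 : n01 = N ∨ n01 = N - E ∨ n01 = N + E)
    (h10 : n10 = N ∨ n10 = N - E ∨ n10 = N + E)
    (h11 : n11 = N ∨ n11 = N - E ∨ n11 = N + E)
    (ha : wa = 0 ∨ wa = 2 * E ∨ wa = -(2 * E))
    (hb : wb = 0 ∨ wb = 2 * E ∨ wb = -(2 * E))
    (hc : wc = 0 ∨ wc = 2 * E ∨ wc = -(2 * E)) :
    ((wa = 0) ↔ ((wb = 0) ↔ (wc = 0))) := by omega

lemma key_id {m : ℕ} (hm : m ≠ 0) (d : ℕ) (ω : GaloisField 2 m) :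
    ∑ γ : GaloisField 2 m, (walsh m d 1 γ) ^ 2 * chi (tr m (γ * ω))
      = 2 ^ m * ∑ y : GaloisField 2 m, chi (tr m (y ^ d + (y + ω) ^ d)) := by
  have step1 : ∀ γ : GaloisField 2 m, (walsh m d 1 γ) ^ 2 * chi (tr m (γ * ω))
      = ∑ x : GaloisField 2 m, ∑ y : GaloisField 2 m,
          chi (tr m (x ^ d + y ^ d)) * chi (tr m ((x + y + ω) * γ)) := by
    intro γ
    rw [sq, walsh, Finset.sum_mul_sum, Finset.sum_mul]
    refine Finset.sum_congr rfl fun x _ => ?_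
    rw [Finset.sum_mul]
    refine Finset.sum_congr rfl fun y _ => ?_
    rw [← chi_add, ← tr_add, ← chi_add, ← tr_add, ← chi_add, ← tr_add]
    exact congrArg _ (congrArg _ (by ring))
  rw [Finset.sum_congr rfl fun γ _ => step1 γ]
  rw [Finset.sum_comm]
  have step2 : ∀ x : GaloisField 2 m,
      (∑ γ : GaloisField 2 m, ∑ y : GaloisField 2 m,
          chi (tr m (x ^ d + y ^ d)) * chi (tr m ((x + y + ω) * γ)))
      = 2 ^ m * chi (tr m (x ^ d + (x + ω) ^ d)) := by
    intro x
    rw [Finset.sum_comm]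
    have inner : ∀ y : GaloisField 2 m,
        (∑ γ : GaloisField 2 m, chi (tr m (x ^ d + y ^ d)) * chi (tr m ((x + y + ω) * γ)))
        = if y = x + ω then chi (tr m (x ^ d + y ^ d)) * 2 ^ m else 0 := by
      intro y
      rw [← Finset.mul_sum, sum_chi_tr hm]
      have hcond : (x + y + ω = 0) ↔ (y = x + ω) := by
        constructor
        · intro h
          have h2 : y + (x + ω) = 0 := by rw [← h]; ring
          have := CharTwo.add_eq_iff_eq_add.mp h2
          rwa [zero_add] at this
        · intro h
          subst h
          have : x + (x + ω) + ω = (x + x) + (ω + ω) := by ring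
          rw [this, CharTwo.add_self_eq_zero, CharTwo.add_self_eq_zero, add_zero]
      simp only [hcond]
      split_ifs <;> simp
    rw [Finset.sum_congr rfl fun y _ => inner y]
    rw [Finset.sum_ite_eq' Finset.univ (x + ω)]
    simp [mul_comm]
  rw [Finset.sum_congr rfl fun x _ => step2 x]
  rw [← Finset.mul_sum]

lemma S_frob {m : ℕ} (d : ℕ) (ω : GaloisField 2 m) :
    ∑ y : GaloisField 2 m, chi (tr m (y ^ d + (y + ω ^ 2) ^ d))
      = ∑ y : GaloisField 2 m, chi (tr m (y ^ d + (y + ω) ^ d)) := by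
  have hfb : Function.Bijective (fun w : GaloisField 2 m => w ^ 2) := by
    have : (fun w : GaloisField 2 m => w ^ 2) = ⇑(frobeniusEquiv (GaloisField 2 m) 2) := by
      funext w
      exact (frobenius_def 2 w).symm
    rw [this]
    exact (frobeniusEquiv (GaloisField 2 m) 2).bijective
  refine (Fintype.sum_bijective _ hfb
    (fun w => chi (tr m (w ^ d + (w + ω) ^ d)))
    (fun y => chi (tr m (y ^ d + (y + ω ^ 2) ^ d))) (fun w => ?_)).symm
  have h1 : (w ^ 2) ^ d = (w ^ d) ^ 2 := by rw [← pow_mul, ← pow_mul, Nat.mul_comm]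
  have h2 : w ^ 2 + ω ^ 2 = (w + ω) ^ 2 := (CharTwo.add_sq w ω).symm
  have h3 : ((w + ω) ^ 2) ^ d = ((w + ω) ^ d) ^ 2 := by rw [← pow_mul, ← pow_mul, Nat.mul_comm]
  simp only [h1, h2, h3, ← CharTwo.add_sq, tr_sq]

end Stmt10Aux

open Stmt10Aux in
set_option maxHeartbeats 2000000 in
theorem stmt10 (m : ℕ) (hm3 : 3 ≤ m) (hmodd : Odd m) (d : ℕ)
    (hgcd : Nat.gcd d (2 ^ m - 1) = 1) (hmax : MaxNonlinear m d)
    (hinter : ∀ α β : GaloisField 2 m, α ≠ 0 → β ≠ 0 → α ≠ β → ∀ i j : ZMod 2,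
      ((Hij m α β i j ∩ Dd m d).card : ℤ) ∈
        ({2 ^ (m - 3), 2 ^ (m - 3) - 2 ^ ((m - 3) / 2),
          2 ^ (m - 3) + 2 ^ ((m - 3) / 2)} : Set ℤ)) :
    ∀ ω : GaloisField 2 m,
      (ω = 0 → (∑ y : GaloisField 2 m, chi (tr m (y ^ d + (y + ω) ^ d))) = 2 ^ m) ∧
      (ω = 1 → (∑ y : GaloisField 2 m, chi (tr m (y ^ d + (y + ω) ^ d))) = -(2 ^ m)) ∧
      (ω ≠ 0 → ω ≠ 1 →
        (∑ y : GaloisField 2 m, chi (tr m (y ^ d + (y + ω) ^ d))) = 0) := by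
  have hm0 : m ≠ 0 := by omega
  have hmm : m % 2 = 1 := Nat.odd_iff.mp hmodd
  set S : GaloisField 2 m → ℤ :=
    fun ω => ∑ y : GaloisField 2 m, chi (tr m (y ^ d + (y + ω) ^ d)) with hSdef
  have hS0 : S 0 = 2 ^ m := by
    have h1 : S 0 = ∑ _y : GaloisField 2 m, (1 : ℤ) :=
      Finset.sum_congr rfl fun y _ => by
        rw [add_zero, CharTwo.add_self_eq_zero, tr_zero, chi_zero]
    rw [h1]
    simp [Finset.sum_const, Finset.card_univ, card_F hm0]
  have hwalsh0 : walsh m d 1 0 = 0 := walsh_at_zero hm3 hgcd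
  set σ : GaloisField 2 m → ZMod 2 :=
    fun γ => if walsh m d 1 γ = 0 then 0 else 1 with hσdef
  have hσ0 : σ 0 = 0 := by rw [hσdef]; simp [hwalsh0]
  have hwalshW : ∀ γ : GaloisField 2 m, γ ≠ 0 → walsh m d 1 γ = -(2 * Wd m d γ) := by
    intro γ h; rw [walsh_one_eq hm0, if_neg h]; ring
  have hWiff : ∀ γ : GaloisField 2 m, γ ≠ 0 → (walsh m d 1 γ = 0 ↔ Wd m d γ = 0) := by
    intro γ h
    rw [hwalshW γ h]
    constructor <;> intro h' <;> linarith
  have hWmem : ∀ γ : GaloisField 2 m, γ ≠ 0 →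
      (Wd m d γ = 0 ∨ Wd m d γ = 2 * 2 ^ ((m - 3) / 2) ∨
        Wd m d γ = -(2 * 2 ^ ((m - 3) / 2))) := by
    intro γ h
    have hp : (2 : ℤ) ^ ((m + 1) / 2) = 4 * 2 ^ ((m - 3) / 2) := by
      rw [show (m + 1) / 2 = (m - 3) / 2 + 2 by omega, pow_add]
      ring
    have hc := hmax 1 one_ne_zero γ
    simp only [Set.mem_insert_iff, Set.mem_singleton_iff] at hc
    rw [hwalshW γ h, hp] at hc
    rcases hc with h' | h' | h'
    · left; linarith
    · right; right; linarith
    · right; left; linarith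
  have hσadd : ∀ a b : GaloisField 2 m, σ (a + b) = σ a + σ b := by
    intro a b
    rcases eq_or_ne a 0 with rfl | ha
    · rw [zero_add, hσ0, zero_add]
    rcases eq_or_ne b 0 with rfl | hb
    · rw [add_zero, hσ0, add_zero]
    rcases eq_or_ne a b with rfl | hab
    · rw [CharTwo.add_self_eq_zero, hσ0]
      exact (CharTwo.add_self_eq_zero _).symm
    · have hab0 : a + b ≠ 0 := by
        intro h
        apply hab
        have h2 := CharTwo.add_eq_iff_eq_add.mp h
        rwa [zero_add] at h2
      have hE : (1 : ℤ) ≤ 2 ^ ((m - 3) / 2) := by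
        have := pow_pos (show (0:ℤ) < 2 by norm_num) ((m - 3) / 2)
        linarith
      have hP4 : ((Dd m d).card : ℤ) = 4 * 2 ^ (m - 3) := by
        have h8 : (2 : ℤ) ^ 3 * 2 ^ (m - 3) = 2 ^ (3 + (m - 3)) := (pow_add 2 3 (m - 3)).symm
        rw [show 3 + (m - 3) = m by omega] at h8
        have hcd := cardD (m := m) (d := d) hm3 hgcd
        norm_num at h8
        linarith
      have e00 := fourN (m := m) d a b 0 0
      have e01 := fourN (m := m) d a b 0 1
      have e10 := fourN (m := m) d a b 1 0
      have e11 := fourN (m := m) d a b 1 1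
      simp only [chi_zero, chi_one, one_mul, mul_one, neg_mul, mul_neg, neg_neg] at e00 e01 e10 e11
      have h00 := hinter a b ha hb hab 0 0
      have h01 := hinter a b ha hb hab 0 1
      have h10 := hinter a b ha hb hab 1 0
      have h11 := hinter a b ha hb hab 1 1
      simp only [Set.mem_insert_iff, Set.mem_singleton_iff] at h00 h01 h10 h11
      have hwa := hWmem a ha
      have hwb := hWmem b hb
      have hwc := hWmem (a + b) hab0
      have hiff := parity (2 ^ (m - 3)) (2 ^ ((m - 3) / 2)) ((Dd m d).card : ℤ)
        (((Hij m a b 0 0 ∩ Dd m d).card : ℤ)) (((Hij m a b 0 1 ∩ Dd m d).card : ℤ))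
        (((Hij m a b 1 0 ∩ Dd m d).card : ℤ)) (((Hij m a b 1 1 ∩ Dd m d).card : ℤ))
        (Wd m d a) (Wd m d b) (Wd m d (a + b))
        hP4 hE (by linarith) (by linarith) (by linarith) (by linarith)
        h00 h01 h10 h11 hwa hwb hwc
      rw [hσdef]
      simp only
      rw [if_congr (hWiff _ hab0) rfl rfl, if_congr (hWiff _ ha) rfl rfl,
        if_congr (hWiff _ hb) rfl rfl]
      by_cases hA : Wd m d a = 0 <;> by_cases hB : Wd m d b = 0
      · have hC : Wd m d (a + b) = 0 := (hiff.mp hA).mp hB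
        simp [hA, hB, hC]
      · have hC : Wd m d (a + b) ≠ 0 := fun h => hB ((hiff.mp hA).mpr h)
        simp [hA, hB, hC]
      · have hC : Wd m d (a + b) ≠ 0 := fun h => hA (hiff.mpr (iff_of_true hB h))
        simp [hA, hB, hC]
      · have hC : Wd m d (a + b) = 0 := by
          by_contra h
          exact hA (hiff.mpr (iff_of_false hB h))
        simp only [if_pos hC, if_neg hA, if_neg hB]
        decide
  let ρσ : GaloisField 2 m →+ ZMod 2 := AddMonoidHom.mk' σ hσadd
  have master : ∀ ω : GaloisField 2 m,
      S ω = (if ω = 0 then (2 ^ m : ℤ) else 0)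
        - (if ρσ + trH m ω = 0 then (2 ^ m : ℤ) else 0) := by
    intro ω
    have h2 : ∀ γ : GaloisField 2 m, (walsh m d 1 γ) ^ 2 * chi (tr m (γ * ω))
        = 2 ^ m * ((1 - chi (σ γ)) * chi (tr m (γ * ω))) := by
      intro γ
      by_cases h : walsh m d 1 γ = 0
      · rw [hσdef]
        simp [h, chi_zero]
      · have hc := hmax 1 one_ne_zero γ
        simp only [Set.mem_insert_iff, Set.mem_singleton_iff] at hc
        have hsq : (walsh m d 1 γ) ^ 2 = 2 ^ (m + 1) := by
          have hp2 : ((2 : ℤ) ^ ((m + 1) / 2)) ^ 2 = 2 ^ (m + 1) := by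
            rw [← pow_mul, show (m + 1) / 2 * 2 = m + 1 by omega]
          rcases hc with h' | h' | h'
          · exact absurd h' h
          · rw [h']; exact hp2
          · rw [h', neg_sq]; exact hp2
        rw [hsq, hσdef]
        simp only [if_neg h, chi_one]
        rw [pow_succ]
        ring
    have h3 := key_id hm0 d ω
    rw [Finset.sum_congr rfl (fun γ _ => h2 γ), ← Finset.mul_sum] at h3
    have h2m : ((2 : ℤ) ^ m) ≠ 0 := by positivity
    have h4 : S ω = ∑ γ : GaloisField 2 m, (1 - chi (σ γ)) * chi (tr m (γ * ω)) :=
      (mul_left_cancel₀ h2m h3).symm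
    rw [h4]
    have h5 : ∀ γ : GaloisField 2 m, (1 - chi (σ γ)) * chi (tr m (γ * ω))
        = chi (tr m (ω * γ)) - chi ((ρσ + trH m ω) γ) := by
      intro γ
      rw [sub_mul, one_mul, mul_comm γ ω]
      congr 1
      rw [show ((ρσ + trH m ω) γ) = σ γ + tr m (ω * γ) from rfl, chi_add]
    rw [Finset.sum_congr rfl (fun γ _ => h5 γ), Finset.sum_sub_distrib,
      sum_chi_tr hm0 ω, sum_chi_hom hm0]
  have hSother : ∀ ω : GaloisField 2 m, ω ≠ 0 → ω ≠ 1 → S ω = 0 := by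
    intro ω h0 h1
    by_cases hz : ρσ + trH m ω = 0
    · exfalso
      have hω2 : ω ^ 2 ≠ 0 := pow_ne_zero _ h0
      have hSω : S ω = -(2 ^ m : ℤ) := by
        rw [master ω, if_neg h0, if_pos hz]; ring
      have hSfrob : S (ω ^ 2) = S ω := S_frob d ω
      by_cases hz2 : ρσ + trH m (ω ^ 2) = 0
      · have htr : trH m (ω + ω ^ 2) = 0 := by
          ext x
          have e1 := DFunLike.congr_fun hz x
          have e2 := DFunLike.congr_fun hz2 x
          simp only [AddMonoidHom.add_apply, AddMonoidHom.zero_apply] at e1 e2 ⊢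
          have f1 : trH m ω x = ρσ x := by
            have h' := eq_neg_of_add_eq_zero_right e1
            rwa [CharTwo.neg_eq] at h'
          have f2 : trH m (ω ^ 2) x = ρσ x := by
            have h' := eq_neg_of_add_eq_zero_right e2
            rwa [CharTwo.neg_eq] at h'
          show trH m (ω + ω ^ 2) x = 0
          rw [trH_apply, add_mul, tr_add, ← trH_apply, ← trH_apply, f1, f2,
            CharTwo.add_self_eq_zero]
        have hzz : ω + ω ^ 2 = 0 := by
          by_contra hne
          exact trH_ne_zero hm0 hne htr
        have hωsq : ω = ω ^ 2 := by
          have h' := CharTwo.add_eq_iff_eq_add.mp hzz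
          rwa [zero_add] at h'
        have hω1 : ω = 1 := by
          have h' : ω * 1 = ω * ω := by rw [mul_one, ← sq]; exact hωsq
          exact (mul_left_cancel₀ h0 h').symm
        exact h1 hω1
      · have hcontr : S (ω ^ 2) = 0 := by
          rw [master _, if_neg hω2, if_neg hz2]; ring
        rw [hSfrob, hSω] at hcontr
        have hpos : (0 : ℤ) < 2 ^ m := by positivity
        linarith
    · rw [master ω, if_neg h0, if_neg hz]; ring
  have htot : ∑ ω : GaloisField 2 m, S ω = 0 := by
    have hy : ∀ y : GaloisField 2 m,
        ∑ ω : GaloisField 2 m, chi (tr m (y ^ d + (y + ω) ^ d)) = 0 := by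
      intro y
      have hb : Function.Bijective (fun ω : GaloisField 2 m => y + ω) :=
        (Equiv.addLeft y).bijective
      rw [Fintype.sum_bijective _ hb
        (fun ω => chi (tr m (y ^ d + (y + ω) ^ d)))
        (fun z => chi (tr m (y ^ d + z ^ d))) (fun ω => rfl)]
      have hfac : ∀ z : GaloisField 2 m,
          chi (tr m (y ^ d + z ^ d)) = chi (tr m (y ^ d)) * chi (tr m (z ^ d)) :=
        fun z => by rw [tr_add, chi_add]
      rw [Finset.sum_congr rfl fun z _ => hfac z, ← Finset.mul_sum,
        sumD_eq_zero hm3 hgcd, mul_zero]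
    have hcomm : ∑ ω : GaloisField 2 m, S ω
        = ∑ y : GaloisField 2 m, ∑ ω : GaloisField 2 m,
            chi (tr m (y ^ d + (y + ω) ^ d)) := Finset.sum_comm
    rw [hcomm, Finset.sum_congr rfl fun y _ => hy y, Finset.sum_const_zero]
  have hS1 : S 1 = -(2 ^ m : ℤ) := by
    have hsplit : ∑ ω : GaloisField 2 m, S ω
        = ∑ ω ∈ (Finset.univ \ ({0, 1} : Finset (GaloisField 2 m))), S ω
          + ∑ ω ∈ ({0, 1} : Finset (GaloisField 2 m)), S ω :=
      (Finset.sum_sdiff (Finset.subset_univ _)).symm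
    have hz : ∑ ω ∈ (Finset.univ \ ({0, 1} : Finset (GaloisField 2 m))), S ω = 0 := by
      apply Finset.sum_eq_zero
      intro x hx
      simp only [Finset.mem_sdiff, Finset.mem_insert, Finset.mem_singleton,
        Finset.mem_univ, true_and] at hx
      push_neg at hx
      exact hSother x hx.1 hx.2
    have hp : ∑ ω ∈ ({0, 1} : Finset (GaloisField 2 m)), S ω = S 0 + S 1 :=
      Finset.sum_pair zero_ne_one
    rw [hsplit, hz, hp, hS0] at htot
    linarith
  intro ω
  refine ⟨fun h => ?_, fun h => ?_, fun h0 h1 => ?_⟩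
  · subst h; exact hS0
  · subst h; exact hS1
  · exact hSother ω h0 h1
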